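/- Let q ≥ 1 be an integer, let δ = (1 − (−1)^q)/2 be the parity of q, let a ∈ ℤ with gcd(a,q) = 1, and let k be an integer with 0 < 2k ≤ q. Then the quadratic exponential sum ℰ_k = Σ exp( (2πia/((2−δ)² q)) · (n_1² − n_2² + n_3² − ⋯ + n_{2k−1}² − n_{2k}²) ), where the sum runs over all tuples (n_1,…,n_{2k}) of integers with 0 ≤ n_1 < n_2 < ⋯ < n_{2k} < q such that 4 ∤ (2n_j + 2 − q) for every j, is purely imaginary: Re ℰ_k = 0. -/

import Mathlib

open scoped Classical

/-- `n` is admissible when `4 ∤ (2n + 2 - q)`. -/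
def Adm (q n : ℕ) : Prop := ¬ ((4 : ℤ) ∣ (2 * (n : ℤ) + 2 - (q : ℤ)))

/-- `δ = (1 - (-1)^q)/2`, the parity of `q` (`δ = 1` iff `q` is odd). -/
def par (q : ℕ) : ℤ := (1 - (-1 : ℤ) ^ q) / 2

/-- The quadratic exponential sum `ℰ_k`: the sum of
`exp( (2πia/((2-δ)²q)) · (n_1² - n_2² + ⋯ + n_{2k-1}² - n_{2k}²) )` over all tuples
`0 ≤ n_1 < n_2 < ⋯ < n_{2k} < q` of admissible indices,
encoded as strictly monotone functions `Fin (2k) → Fin q`. -/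
noncomputable def Esum (a : ℤ) (q k : ℕ) : ℂ :=
  ∑ f ∈ Finset.univ.filter
      (fun f : Fin (2 * k) → Fin q => StrictMono f ∧ ∀ j, Adm q (f j)),
    Complex.exp ((2 * Real.pi * Complex.I * (a : ℂ) / (((2 : ℂ) - (par q : ℂ)) ^ 2 * (q : ℂ)))
      * (∑ j : Fin (2 * k), (-1 : ℂ) ^ (j : ℕ) * ((f j : ℕ) : ℂ) ^ 2))




lemma alt_sum_bounds (N : ℕ) (hN : 1 ≤ N) (g : ℕ → ℤ)
    (hg : ∀ i j, i < j → j < 2*N → g i < g j) :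
    g 0 - g (2*N - 1) ≤ ∑ j ∈ Finset.range (2*N), (-1:ℤ)^j * g j ∧
    ∑ j ∈ Finset.range (2*N), (-1:ℤ)^j * g j ≤ - N := by
  induction N with
  | zero => omega
  | succ N ih =>
    rcases Nat.eq_or_lt_of_le hN with h1 | h1
    · have hN0 : N = 0 := by omega
      subst hN0
      have hg01 : g 0 < g 1 := hg 0 1 (by omega) (by omega)
      norm_num [Finset.sum_range_succ]
      omega
    · have hN1 : 1 ≤ N := by omega
      have ihs := ih hN1 (fun i j hij hj => hg i j hij (by omega))
      have h2 : 2*(N+1) = (2*N) + 1 + 1 := by omega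
      rw [show 2*(N+1)-1 = 2*N+1 by omega, h2, Finset.sum_range_succ, Finset.sum_range_succ]
      have he : (-1:ℤ)^(2*N) = 1 := by simp [pow_mul]
      have ho : (-1:ℤ)^(2*N+1) = -1 := by rw [pow_succ, he]; ring
      have hlt1 : g (2*N - 1) < g (2*N) := hg _ _ (by omega) (by omega)
      have hlt2 : g (2*N) < g (2*N+1) := hg _ _ (by omega) (by omega)
      rw [he, ho]
      have h3 := ihs.1
      have h4 := ihs.2
      constructor
      · omega
      · push_cast
        omega

lemma sum_range_neg_one_pow (k : ℕ) : ∑ j ∈ Finset.range (2*k), (-1:ℤ)^j = 0 := by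
  induction k with
  | zero => simp
  | succ k ih =>
    rw [show 2*(k+1) = 2*k+1+1 by omega, Finset.sum_range_succ, Finset.sum_range_succ, ih]
    have he : (-1:ℤ)^(2*k) = 1 := by simp [pow_mul]
    rw [he, pow_succ, he]; ring


noncomputable def rk {q : ℕ} (s : Finset (Fin q)) (n : Fin q) : ℕ :=
  (s.filter (· < n)).card

lemma fin_card_filter_lt {n : ℕ} (p : Fin n) :
    (Finset.univ.filter (fun j => j < p)).card = (p : ℕ) := by
  rw [show Finset.univ.filter (fun j => j < p) = Finset.Iio p by ext j; simp]
  exact Fin.card_Iio p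

lemma image_orderEmbOfFin {q m : ℕ} (s : Finset (Fin q)) (h : s.card = m) :
    Finset.univ.image (s.orderEmbOfFin h) = s := by
  ext n
  simp only [Finset.mem_image, Finset.mem_univ, true_and]
  constructor
  · rintro ⟨p, rfl⟩; exact s.orderEmbOfFin_mem h p
  · intro hn
    exact Set.mem_range.1 (by rw [s.range_orderEmbOfFin h]; exact hn)

lemma rk_orderEmbOfFin {q m : ℕ} (s : Finset (Fin q)) (h : s.card = m) (p : Fin m) :
    rk s (s.orderEmbOfFin h p) = (p : ℕ) := by
  unfold rk
  have key : s.filter (· < s.orderEmbOfFin h p)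
      = (Finset.univ.filter (fun j => j < p)).image (s.orderEmbOfFin h) := by
    ext n
    simp only [Finset.mem_filter, Finset.mem_image, Finset.mem_univ, true_and]
    constructor
    · rintro ⟨hn, hlt⟩
      have : n ∈ Finset.univ.image (s.orderEmbOfFin h) := (image_orderEmbOfFin s h).symm ▸ hn
      obtain ⟨j, -, rfl⟩ := Finset.mem_image.1 this
      exact ⟨j, (s.orderEmbOfFin h).strictMono.lt_iff_lt.1 hlt, rfl⟩
    · rintro ⟨j, hj, rfl⟩
      exact ⟨s.orderEmbOfFin_mem h j, (s.orderEmbOfFin h).strictMono hj⟩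
  rw [key, Finset.card_image_of_injective _ (s.orderEmbOfFin h).injective,
    fin_card_filter_lt p]

lemma sum_over_rank {q m : ℕ} (s : Finset (Fin q)) (h : s.card = m) (F : ℕ → Fin q → ℤ) :
    ∑ n ∈ s, F (rk s n) n = ∑ p : Fin m, F (p : ℕ) (s.orderEmbOfFin h p) := by
  have h2 : ∑ n ∈ s, F (rk s n) n
      = ∑ n ∈ Finset.univ.image (s.orderEmbOfFin h), F (rk s n) n := by
    rw [image_orderEmbOfFin s h]
  rw [h2, Finset.sum_image (fun x _ y _ hxy => (s.orderEmbOfFin h).injective hxy)]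
  exact Finset.sum_congr rfl fun p _ => by rw [rk_orderEmbOfFin]

def shv (q t : ℕ) (n : Fin q) : Fin q :=
  ⟨((n : ℕ) + 2*t) % q, Nat.mod_lt _ n.pos⟩

lemma shv_inj (q t : ℕ) : Function.Injective (shv q t) := by
  intro m n h
  have h1 : ((m:ℕ) + 2*t) % q = ((n:ℕ) + 2*t) % q := congrArg Fin.val h
  have h2 : ((m:ℕ)) % q = ((n:ℕ)) % q :=
    Nat.ModEq.add_right_cancel' (2*t) h1
  have := m.isLt; have := n.isLt
  apply Fin.ext
  rwa [Nat.mod_eq_of_lt m.isLt, Nat.mod_eq_of_lt n.isLt] at h2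

lemma shv_shv (q t t' : ℕ) (h : t + t' = q) (n : Fin q) :
    shv q t' (shv q t n) = n := by
  apply Fin.ext
  show (((n:ℕ) + 2*t) % q + 2*t') % q = (n:ℕ)
  rw [Nat.mod_add_mod, show (n:ℕ) + 2*t + 2*t' = (n:ℕ) + 2*q by omega,
    Nat.add_mul_mod_self_right, Nat.mod_eq_of_lt n.isLt]

lemma shv_val_int (q t : ℕ) (n : Fin q) :
    ((shv q t n : ℕ) : ℤ) = ((n:ℕ) : ℤ) + 2*t - q * ((((n:ℕ) + 2*t)/q : ℕ) : ℤ) := by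
  set w : ℕ := ((n:ℕ) + 2*t)/q with hw
  have h0 : (shv q t n : ℕ) + q * w = (n:ℕ) + 2*t := by
    rw [hw]
    exact Nat.mod_add_div _ _
  push_cast at h0
  push_cast
  omega

lemma adm_odd (q n : ℕ) (hq : Odd q) : Adm q n := by
  obtain ⟨m, hm⟩ := hq
  unfold Adm
  omega

lemma adm_shv (q t : ℕ) (n : Fin q) (h : Adm q n) : Adm q (shv q t n) := by
  rcases Nat.even_or_odd q with hq | hq
  · obtain ⟨m, hm⟩ := hq
    unfold Adm at h ⊢
    have h1 := shv_val_int q t n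
    set w : ℕ := (((n:ℕ) + 2*t)/q) with hw
    have hc : ((q:ℕ):ℤ) * ((w:ℕ):ℤ) = 2*(((m:ℕ):ℤ)*((w:ℕ):ℤ)) := by
      have : ((q:ℕ):ℤ) = 2*(m:ℤ) := by exact_mod_cast congrArg (Nat.cast : ℕ → ℤ) (by omega : q = 2*m)
      rw [this]; ring
    omega
  · exact adm_odd q _ hq

lemma shv_lt_iff (q t : ℕ) (m n : Fin q) :
    shv q t m < shv q t n ↔
      ((((m:ℕ) + 2*t)/q = ((n:ℕ) + 2*t)/q ∧ m < n) ∨ ((n:ℕ) + 2*t)/q < ((m:ℕ) + 2*t)/q) := by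
  have hm := Nat.mod_add_div ((m:ℕ) + 2*t) q
  have hn := Nat.mod_add_div ((n:ℕ) + 2*t) q
  have hmlt : ((m:ℕ) + 2*t) % q < q := Nat.mod_lt _ m.pos
  have hnlt : ((n:ℕ) + 2*t) % q < q := Nat.mod_lt _ n.pos
  have hmq := m.isLt
  have hnq := n.isLt
  rw [Fin.lt_def, Fin.lt_def]
  show ((m:ℕ) + 2*t) % q < ((n:ℕ) + 2*t) % q ↔ _
  set wa := ((m:ℕ) + 2*t)/q with hwa
  set wb := ((n:ℕ) + 2*t)/q with hwb
  rcases Nat.lt_trichotomy wa wb with hc | hc | hc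
  · have hmul : q * (wa + 1) ≤ q * wb := Nat.mul_le_mul_left q hc
    rw [Nat.mul_add, Nat.mul_one] at hmul
    omega
  · rw [hc] at hm ⊢
    omega
  · have hmul : q * (wb + 1) ≤ q * wa := Nat.mul_le_mul_left q hc
    rw [Nat.mul_add, Nat.mul_one] at hmul
    omega


def Dzi (q : ℕ) : ℤ := (2 - par q)^2 * q

lemma par_even {q : ℕ} (hq : Even q) : par q = 0 := by
  unfold par; rw [hq.neg_one_pow]; norm_num

lemma par_odd {q : ℕ} (hq : Odd q) : par q = 1 := by
  unfold par; rw [hq.neg_one_pow]; norm_num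

lemma Dzi_odd {q : ℕ} (hq : Odd q) : Dzi q = q := by
  unfold Dzi; rw [par_odd hq]; norm_num

lemma Dzi_even {q : ℕ} (hq : Even q) : Dzi q = 4*q := by
  unfold Dzi; rw [par_even hq]; norm_num

noncomputable def QS {q : ℕ} (s : Finset (Fin q)) : ℤ :=
  ∑ n ∈ s, (-1)^(rk s n) * ((n : ℕ) : ℤ)^2

noncomputable def SS {q : ℕ} (s : Finset (Fin q)) : ℤ :=
  ∑ n ∈ s, (-1)^(rk s n) * ((n : ℕ) : ℤ)

lemma sq_shv_modeq (q t : ℕ) (n : Fin q) (h : Adm q n) :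
    ((shv q t n : ℕ) : ℤ)^2 ≡ (((n:ℕ):ℤ) + 2*t)^2 [ZMOD (Dzi q)] := by
  have h1 := shv_val_int q t n
  set w : ℕ := ((n:ℕ) + 2*t)/q with hw
  rw [Int.modEq_iff_dvd]
  rcases Nat.even_or_odd q with hq | hq
  · rw [Dzi_even hq]
    obtain ⟨m, hm⟩ := hq
    have hqm : ((q:ℕ):ℤ) = (m:ℤ) + (m:ℤ) := by exact_mod_cast congrArg (Nat.cast : ℕ → ℤ) hm
    have hpar : (2:ℤ) ∣ (((n:ℕ):ℤ) - (m:ℤ)) := by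
      unfold Adm at h; omega
    obtain ⟨v, hv⟩ := hpar
    rcases Int.even_or_odd (w:ℤ) with ⟨u, hu⟩ | ⟨u, hu⟩
    · refine ⟨(u:ℤ)*(((n:ℕ):ℤ) + 2*t - 2*(m:ℤ)*u), ?_⟩
      rw [h1, hqm, hu]; ring
    · refine ⟨(2*u+1)*((v:ℤ) + t - (m:ℤ)*u), ?_⟩
      rw [h1, hqm, hu, show ((n:ℕ):ℤ) = (m:ℤ) + 2*v by omega]; ring
  · rw [Dzi_odd hq]
    refine ⟨(w:ℤ)*(2*(((n:ℕ):ℤ) + 2*t) - (q:ℤ)*w), ?_⟩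
    rw [h1]; ring

lemma SS_bounds (q k : ℕ) (s : Finset (Fin q)) (hcard : s.card = 2*k) (hk : 0 < k) :
    -(q:ℤ) < SS s ∧ SS s < 0 := by
  have hSS : SS s = ∑ p : Fin (2*k), (-1:ℤ)^(p:ℕ) * ((s.orderEmbOfFin hcard p : ℕ):ℤ) :=
    sum_over_rank s hcard (fun r n => (-1)^r * ((n:ℕ):ℤ))
  set g : ℕ → ℤ := fun j =>
    if h : j < 2*k then ((s.orderEmbOfFin hcard ⟨j, h⟩ : ℕ) : ℤ) else 0 with hg
  have h2 : SS s = ∑ j ∈ Finset.range (2*k), (-1:ℤ)^j * g j := by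
    rw [hSS, ← Fin.sum_univ_eq_sum_range (fun j => (-1:ℤ)^j * g j)]
    apply Finset.sum_congr rfl
    intro p _
    simp only [hg, p.isLt, dif_pos, Fin.eta]
  have hmono : ∀ i j, i < j → j < 2*k → g i < g j := by
    intro i j hij hj
    simp only [hg, dif_pos (by omega : i < 2*k), dif_pos hj]
    have : (⟨i, by omega⟩ : Fin (2*k)) < ⟨j, hj⟩ := by simp [Fin.lt_def]; omega
    have := (s.orderEmbOfFin hcard).strictMono this
    exact_mod_cast Fin.lt_def.1 this
  have hb := alt_sum_bounds k hk g hmono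
  have hg0 : 0 ≤ g 0 := by
    simp only [hg, dif_pos (by omega : 0 < 2*k)]
    positivity
  have hglast : g (2*k - 1) < (q:ℤ) := by
    simp only [hg, dif_pos (by omega : 2*k - 1 < 2*k)]
    exact_mod_cast (s.orderEmbOfFin hcard ⟨2*k-1, by omega⟩).isLt
  rw [h2]
  have hk' : (1:ℤ) ≤ (k:ℤ) := by exact_mod_cast hk
  constructor
  · have := hb.1; omega
  · have := hb.2; omega
lemma QS_shift (q t k : ℕ) (s : Finset (Fin q)) (hcard : s.card = 2*k) (hk : 0 < k)
    (hadm : ∀ n ∈ s, Adm q n) :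
    ∃ d : ℕ, QS (s.image (shv q t)) ≡ (-1)^d * (QS s + 4*t*(SS s)) [ZMOD (Dzi q)] := by
  have hne : s.Nonempty := Finset.card_pos.1 (by omega)
  set n₀ := s.min' hne with hn0
  have hq0 : 0 < q := n₀.pos
  set w : Fin q → ℕ := fun n => ((n:ℕ) + 2*t)/q with hwdef
  set c₀ := w n₀ with hc0
  have F1 : ∀ n ∈ s, w n = c₀ ∨ w n = c₀ + 1 := by
    intro n hn
    have h1 : (n₀:ℕ) ≤ (n:ℕ) := s.min'_le n hn
    have h2 : c₀ ≤ w n := Nat.div_le_div_right (by omega)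
    have h3 : w n ≤ c₀ + 1 := by
      have hlt : (n:ℕ) + 2*t ≤ (n₀:ℕ) + 2*t + q := by have := n.isLt; omega
      calc w n ≤ ((n₀:ℕ) + 2*t + q)/q := Nat.div_le_div_right hlt
        _ = c₀ + 1 := Nat.add_div_right _ hq0
    omega
  have F2 : ∀ m n : Fin q, m ≤ n → w m ≤ w n := by
    intro m n h
    exact Nat.div_le_div_right (by have : (m:ℕ) ≤ (n:ℕ) := h; omega)
  have F3 : ∀ m n : Fin q, w m < w n → m < n := by
    intro m n h
    by_contra hc
    push_neg at hc
    exact absurd (F2 n m hc) (by omega)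
  have hlt_iff : ∀ m n : Fin q,
      shv q t m < shv q t n ↔ ((w m = w n ∧ m < n) ∨ w n < w m) :=
    fun m n => shv_lt_iff q t m n
  set d := (s.filter (fun m => w m = c₀ + 1)).card with hd
  have hdcard : (s.filter (fun m => w m = c₀)).card + d = 2*k := by
    have h0 := Finset.card_filter_add_card_filter_not
      (s := s) (p := fun m => w m = c₀)
    have he : s.filter (fun m => ¬ (w m = c₀)) = s.filter (fun m => w m = c₀ + 1) := by
      apply Finset.filter_congr
      intro m hm
      rcases F1 m hm with h | h <;> simp [h]
    rw [he] at h0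
    rw [hd, h0, hcard]
  have hdle : d ≤ 2*k := by omega
  have rk_im : ∀ n : Fin q, rk (s.image (shv q t)) (shv q t n)
      = (s.filter (fun m => shv q t m < shv q t n)).card := by
    intro n
    unfold rk
    rw [Finset.filter_image, Finset.card_image_of_injective _ (shv_inj q t)]
  have hrk : ∀ n : Fin q, rk s n = (s.filter (fun m => m < n)).card := fun n => rfl
  have sign : ∀ n ∈ s, ((-1:ℤ))^(rk (s.image (shv q t)) (shv q t n))
      = (-1)^d * (-1)^(rk s n) := by
    intro n hn
    rcases F1 n hn with hwn | hwn
    -- case A : w n = c₀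
    · have e1 : s.filter (fun m => shv q t m < shv q t n)
          = (s.filter (fun m => m < n)) ∪ (s.filter (fun m => w m = c₀+1)) := by
        ext m
        simp only [Finset.mem_filter, Finset.mem_union]
        constructor
        · rintro ⟨hm, hlt⟩
          rcases (hlt_iff m n).1 hlt with ⟨he, hlt2⟩ | hgt
          · exact Or.inl ⟨hm, hlt2⟩
          · refine Or.inr ⟨hm, ?_⟩
            rcases F1 m hm with h | h
            · exfalso; omega
            · exact h
        · rintro (⟨hm, hlt⟩ | ⟨hm, hw⟩)
          · refine ⟨hm, (hlt_iff m n).2 (Or.inl ⟨?_, hlt⟩)⟩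
            have := F2 m n (le_of_lt hlt)
            rcases F1 m hm with h | h <;> omega
          · exact ⟨hm, (hlt_iff m n).2 (Or.inr (by omega))⟩
      have hdisj : Disjoint (s.filter (fun m => m < n)) (s.filter (fun m => w m = c₀+1)) := by
        rw [Finset.disjoint_left]
        intro m hm1 hm2
        rw [Finset.mem_filter] at hm1 hm2
        have h1 := F2 m n (le_of_lt hm1.2)
        omega
      rw [rk_im n, e1, Finset.card_union_of_disjoint hdisj, ← hrk n, ← hd, pow_add]
      ring
    -- case B : w n = c₀ + 1
    · have e2 : s.filter (fun m => shv q t m < shv q t n)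
          = s.filter (fun m => w m = c₀+1 ∧ m < n) := by
        ext m
        simp only [Finset.mem_filter]
        constructor
        · rintro ⟨hm, hlt⟩
          rcases (hlt_iff m n).1 hlt with ⟨he, hlt2⟩ | hgt
          · exact ⟨hm, by omega, hlt2⟩
          · exfalso
            rcases F1 m hm with h | h <;> omega
        · rintro ⟨hm, hw, hlt⟩
          exact ⟨hm, (hlt_iff m n).2 (Or.inl ⟨by omega, hlt⟩)⟩
      have e3 : s.filter (fun m => m < n)
          = (s.filter (fun m => w m = c₀)) ∪ (s.filter (fun m => w m = c₀+1 ∧ m < n)) := by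
        ext m
        simp only [Finset.mem_filter, Finset.mem_union]
        constructor
        · rintro ⟨hm, hlt⟩
          rcases F1 m hm with h | h
          · exact Or.inl ⟨hm, h⟩
          · exact Or.inr ⟨hm, h, hlt⟩
        · rintro (⟨hm, hw⟩ | ⟨hm, hw, hlt⟩)
          · exact ⟨hm, F3 m n (by omega)⟩
          · exact ⟨hm, hlt⟩
      have hdisj : Disjoint (s.filter (fun m => w m = c₀))
          (s.filter (fun m => w m = c₀+1 ∧ m < n)) := by
        rw [Finset.disjoint_left]
        intro m hm1 hm2
        rw [Finset.mem_filter] at hm1 hm2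
        omega
      have hcount : rk s n = (2*k - d) + rk (s.image (shv q t)) (shv q t n) := by
        rw [rk_im n, e2, hrk n, e3, Finset.card_union_of_disjoint hdisj]
        omega
      have hsum : rk s n + d = rk (s.image (shv q t)) (shv q t n) + 2*k := by omega
      calc ((-1:ℤ))^(rk (s.image (shv q t)) (shv q t n))
          = (-1)^(rk (s.image (shv q t)) (shv q t n)) * ((-1:ℤ)^2)^k := by norm_num
        _ = (-1)^(rk (s.image (shv q t)) (shv q t n) + 2*k) := by
            rw [pow_add, pow_mul]
        _ = (-1)^(rk s n + d) := by rw [hsum]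
        _ = (-1)^d * (-1)^(rk s n) := by rw [pow_add]; ring
  -- now the sum manipulation
  refine ⟨d, ?_⟩
  have hA : QS (s.image (shv q t))
      = ∑ n ∈ s, (-1:ℤ)^d * (-1)^(rk s n) * (((shv q t n : ℕ)):ℤ)^2 := by
    unfold QS
    rw [Finset.sum_image (fun x _ y _ hxy => shv_inj q t hxy)]
    exact Finset.sum_congr rfl fun n hn => by rw [sign n hn]
  have hZ : ∑ n ∈ s, ((-1:ℤ))^(rk s n) = 0 := by
    have := sum_over_rank s hcard (fun r _ => ((-1:ℤ))^r)
    rw [this, Fin.sum_univ_eq_sum_range (fun j => ((-1:ℤ))^j), sum_range_neg_one_pow]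
  have hB : (-1:ℤ)^d * (QS s + 4*t*(SS s))
      = ∑ n ∈ s, (-1:ℤ)^d * (-1)^(rk s n) * (((n:ℕ):ℤ) + 2*t)^2 := by
    have expand : ∀ n ∈ s, (-1:ℤ)^d * (-1)^(rk s n) * (((n:ℕ):ℤ) + 2*t)^2
        = (-1:ℤ)^d * ((-1)^(rk s n) * ((n:ℕ):ℤ)^2)
          + ((-1:ℤ)^d * (4*t)) * ((-1)^(rk s n) * ((n:ℕ):ℤ))
          + ((-1:ℤ)^d * (4*t^2)) * ((-1)^(rk s n)) := by
      intro n _; ring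
    rw [Finset.sum_congr rfl expand]
    rw [Finset.sum_add_distrib, Finset.sum_add_distrib, ← Finset.mul_sum, ← Finset.mul_sum,
      ← Finset.mul_sum, hZ, mul_zero, add_zero]
    unfold QS SS
    ring
  rw [hA, hB, Int.modEq_iff_dvd, ← Finset.sum_sub_distrib]
  apply Finset.dvd_sum
  intro n hn
  have hsq := (sq_shv_modeq q t n (hadm n hn)).dvd
  have : (-1:ℤ)^d * (-1)^(rk s n) * (((n:ℕ):ℤ) + 2*t)^2
      - (-1:ℤ)^d * (-1)^(rk s n) * (((shv q t n : ℕ)):ℤ)^2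
      = ((-1:ℤ)^d * (-1)^(rk s n)) * ((((n:ℕ):ℤ) + 2*t)^2 - (((shv q t n : ℕ)):ℤ)^2) := by
    ring
  rw [this]
  exact hsq.mul_left _
noncomputable def Ef (q : ℕ) (a : ℤ) (X : ℤ) : ℂ :=
  Complex.exp ((2 * Real.pi * Complex.I * (a : ℂ) / (((2 : ℂ) - (par q : ℂ)) ^ 2 * (q : ℂ)))
    * (X : ℂ))

lemma Dc_eq (q : ℕ) : (((2 : ℂ) - (par q : ℂ)) ^ 2 * (q : ℂ)) = ((Dzi q : ℤ) : ℂ) := by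
  unfold Dzi; push_cast; ring

lemma Dzi_pos {q : ℕ} (hq : 1 ≤ q) : 0 < Dzi q := by
  rcases Nat.even_or_odd q with h | h
  · rw [Dzi_even h]; positivity
  · rw [Dzi_odd h]; positivity

lemma Ef_mod {q : ℕ} (hq : 1 ≤ q) (a : ℤ) {X Y : ℤ} (h : X ≡ Y [ZMOD Dzi q]) :
    Ef q a X = Ef q a Y := by
  obtain ⟨u, hu⟩ := Int.modEq_iff_dvd.1 h
  have hY : Y = X + Dzi q * u := by omega
  have hne : ((Dzi q : ℤ) : ℂ) ≠ 0 := by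
    rw [Int.cast_ne_zero]; exact ne_of_gt (Dzi_pos hq)
  unfold Ef
  rw [hY, Dc_eq]
  push_cast
  rw [mul_add, Complex.exp_add]
  have h1 : 2 * (Real.pi:ℂ) * Complex.I * (a:ℂ) / ((Dzi q : ℤ):ℂ) * (((Dzi q:ℤ):ℂ) * (u:ℂ))
      = ((a*u : ℤ):ℂ) * (2 * (Real.pi:ℂ) * Complex.I) := by
    push_cast
    field_simp
  rw [h1, Complex.exp_int_mul_two_pi_mul_I, mul_one]

lemma Ef_add (q : ℕ) (a X Y : ℤ) : Ef q a (X + Y) = Ef q a X * Ef q a Y := by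
  unfold Ef
  rw [← Complex.exp_add]
  congr 1
  push_cast
  ring

lemma Ef_pow (q : ℕ) (a : ℤ) (t : ℕ) (X : ℤ) : Ef q a (t * X) = (Ef q a X)^t := by
  unfold Ef
  rw [← Complex.exp_nat_mul]
  congr 1
  push_cast
  ring

lemma Ef_zero (q : ℕ) (a : ℤ) : Ef q a 0 = 1 := by
  unfold Ef; simp

lemma Ef_conj (q : ℕ) (a X : ℤ) : (starRingEnd ℂ) (Ef q a X) = Ef q a (-X) := by
  unfold Ef
  rw [← Complex.exp_conj]
  congr 1
  simp only [map_mul, map_div₀, map_sub, map_pow, map_ofNat, map_intCast, map_natCast,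
    Complex.conj_I, Complex.conj_ofReal]
  push_cast
  ring

lemma Ef_geom {q : ℕ} (hq : 1 ≤ q) {a : ℤ} (ha : Int.gcd a (q:ℤ) = 1) (S : ℤ)
    (hS : ¬ ((q:ℤ) ∣ S)) :
    ∑ t ∈ Finset.range q, (Ef q a (4*S))^t = 0 := by
  have hzq : (Ef q a (4*S))^q = 1 := by
    rw [← Ef_pow]
    have hdvd : Dzi q ∣ (q:ℤ) * (4*S) := by
      rcases Nat.even_or_odd q with h | h
      · rw [Dzi_even h]; exact ⟨S, by ring⟩
      · rw [Dzi_odd h]; exact ⟨4*S, by ring⟩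
    have : ((q:ℕ):ℤ) * (4*S) ≡ 0 [ZMOD Dzi q] := (Int.modEq_zero_iff_dvd).2 hdvd
    rw [Ef_mod hq a this, Ef_zero]
  have hz1 : Ef q a (4*S) ≠ 1 := by
    intro hz
    unfold Ef at hz
    rw [Complex.exp_eq_one_iff] at hz
    obtain ⟨n, hn⟩ := hz
    rw [Dc_eq] at hn
    have hne : ((Dzi q : ℤ) : ℂ) ≠ 0 := by
      rw [Int.cast_ne_zero]; exact ne_of_gt (Dzi_pos hq)
    have h2pi : (2 * (Real.pi:ℂ) * Complex.I) ≠ 0 := by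
      simp [Real.pi_ne_zero, Complex.I_ne_zero, Complex.ofReal_ne_zero]
    have hn' : (2*(Real.pi:ℂ)*Complex.I) * ((a:ℂ)*(4*(S:ℂ)))
        = (2*(Real.pi:ℂ)*Complex.I) * ((n:ℂ)*((Dzi q:ℤ):ℂ)) := by
      rw [div_mul_eq_mul_div, div_eq_iff hne] at hn
      push_cast at hn
      linear_combination hn
    have hC : (a:ℂ)*(4*(S:ℂ)) = (n:ℂ)*((Dzi q:ℤ):ℂ) := mul_left_cancel₀ h2pi hn'
    have hint : a*(4*S) = n * Dzi q := by exact_mod_cast hC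
    have hdvd : Dzi q ∣ 4*a*S := ⟨n, by linarith⟩
    have hqS : (q:ℤ) ∣ S := by
      have hca : IsCoprime ((q:ℕ):ℤ) a := by
        rw [Int.isCoprime_iff_gcd_eq_one, Int.gcd_comm]; exact ha
      rcases Nat.even_or_odd q with h | h
      · rw [Dzi_even h] at hdvd
        have h4 : (4:ℤ) * (q:ℤ) ∣ 4 * (a*S) := by
          rw [← mul_assoc]; exact hdvd
        have := (mul_dvd_mul_iff_left (by norm_num : (4:ℤ) ≠ 0)).1 h4
        exact hca.dvd_of_dvd_mul_left this
      · rw [Dzi_odd h] at hdvd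
        have hc2 : IsCoprime ((q:ℕ):ℤ) (2:ℤ) := by
          rw [Int.isCoprime_iff_gcd_eq_one]
          have : ¬ (2 ∣ q) := by
            rw [Nat.odd_iff] at h; omega
          have hn2 : Nat.Coprime q 2 :=
            Nat.Coprime.symm ((Nat.prime_two.coprime_iff_not_dvd).2 this)
          have : Int.gcd ((q:ℕ):ℤ) (2:ℤ) = Nat.gcd q 2 := by
            rw [Int.gcd]
            simp
          rw [this]
          exact hn2
        have hc4 : IsCoprime ((q:ℕ):ℤ) (4:ℤ) := by
          have h22 := hc2.mul_right hc2
          have he : (2:ℤ)*2 = 4 := by norm_num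
          rwa [he] at h22
        have hcop : IsCoprime ((q:ℕ):ℤ) (4*a) := hc4.mul_right hca
        exact hcop.dvd_of_dvd_mul_left hdvd
    exact hS hqS
  rw [geom_sum_eq hz1, hzq]
  simp

lemma QS_of_strictMono {q m : ℕ} (f : Fin m → Fin q) (hf : StrictMono f) :
    QS (Finset.univ.image f) = ∑ p : Fin m, (-1:ℤ)^(p:ℕ) * ((f p : ℕ):ℤ)^2 := by
  have hcard : (Finset.univ.image f).card = m := by
    rw [Finset.card_image_of_injective _ hf.injective, Finset.card_univ, Fintype.card_fin]
  have hfe : f = ⇑((Finset.univ.image f).orderEmbOfFin hcard) :=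
    Finset.orderEmbOfFin_unique hcard (fun x => Finset.mem_image_of_mem f (Finset.mem_univ x)) hf
  have h1 : QS (Finset.univ.image f) = ∑ p : Fin m,
      (-1:ℤ)^(p:ℕ) * ((((Finset.univ.image f).orderEmbOfFin hcard p : Fin q) : ℕ):ℤ)^2 :=
    sum_over_rank _ hcard (fun r n => (-1:ℤ)^r * ((n:ℕ):ℤ)^2)
  rw [h1, ← hfe]


theorem stmt7 (q : ℕ) (hq : 1 ≤ q) (a : ℤ) (ha : Int.gcd a (q : ℤ) = 1)
    (k : ℕ) (hk : 0 < 2 * k) (hkq : 2 * k ≤ q) :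
    (Esum a q k).re = 0 := by
  classical
  have hk' : 0 < k := by omega
  set 𝒮 := Finset.univ.filter
    (fun s : Finset (Fin q) => s.card = 2*k ∧ ∀ n ∈ s, Adm q (n : ℕ)) with hSdef
  have memS : ∀ s ∈ 𝒮, s.card = 2*k ∧ ∀ n ∈ s, Adm q (n:ℕ) :=
    fun s hs => (Finset.mem_filter.1 hs).2
  -- conversion to a sum over subsets
  have CONV : Esum a q k = ∑ s ∈ 𝒮, Ef q a (QS s) := by
    unfold Esum
    apply Finset.sum_bij' (i := fun f (_ : f ∈ Finset.univ.filter
        (fun f : Fin (2 * k) → Fin q => StrictMono f ∧ ∀ j, Adm q (f j))) =>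
        Finset.univ.image f)
      (j := fun s hs => ⇑(s.orderEmbOfFin (memS s hs).1))
    case hi =>
      intro f hf
      obtain ⟨hmono, hadm⟩ := (Finset.mem_filter.1 hf).2
      refine Finset.mem_filter.2 ⟨Finset.mem_univ _, ?_, ?_⟩
      · rw [Finset.card_image_of_injective _ hmono.injective, Finset.card_univ,
          Fintype.card_fin]
      · intro n hn
        obtain ⟨j, -, rfl⟩ := Finset.mem_image.1 hn
        exact hadm j
    case hj =>
      intro s hs
      refine Finset.mem_filter.2 ⟨Finset.mem_univ _, (s.orderEmbOfFin (memS s hs).1).strictMono,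
        fun j => (memS s hs).2 _ (s.orderEmbOfFin_mem (memS s hs).1 j)⟩
    case left_neg =>
      intro f hf
      exact (Finset.orderEmbOfFin_unique _
        (fun x => Finset.mem_image_of_mem f (Finset.mem_univ x))
        (Finset.mem_filter.1 hf).2.1).symm
    case right_neg =>
      intro s hs
      exact image_orderEmbOfFin s (memS s hs).1
    case h =>
      intro f hf
      rw [QS_of_strictMono f (Finset.mem_filter.1 hf).2.1]
      unfold Ef
      congr 1
      push_cast
      ring
  have CONJ : (starRingEnd ℂ) (Esum a q k) = ∑ s ∈ 𝒮, Ef q a (-(QS s)) := by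
    rw [CONV, map_sum]
    exact Finset.sum_congr rfl fun s _ => Ef_conj q a (QS s)
  set A := ∑ s ∈ 𝒮, (Ef q a (QS s) + Ef q a (-(QS s))) with hA
  have KEY : ∀ t ∈ Finset.range q,
      A = ∑ s ∈ 𝒮, (Ef q a (QS s + 4*(t:ℤ)*SS s) + Ef q a (-(QS s + 4*(t:ℤ)*SS s))) := by
    intro t ht
    have htq : t < q := Finset.mem_range.1 ht
    rw [hA]
    symm
    apply Finset.sum_nbij' (i := fun s => Finset.image (shv q t) s)
      (j := fun s => Finset.image (shv q (q - t)) s)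
    case hi =>
      intro s hs
      refine Finset.mem_filter.2 ⟨Finset.mem_univ _, ?_, ?_⟩
      · rw [Finset.card_image_of_injective _ (shv_inj q t)]; exact (memS s hs).1
      · intro n hn
        obtain ⟨n₀, hn₀, rfl⟩ := Finset.mem_image.1 hn
        exact adm_shv q t n₀ ((memS s hs).2 n₀ hn₀)
    case hj =>
      intro s hs
      refine Finset.mem_filter.2 ⟨Finset.mem_univ _, ?_, ?_⟩
      · rw [Finset.card_image_of_injective _ (shv_inj q (q - t))]; exact (memS s hs).1
      · intro n hn
        obtain ⟨n₀, hn₀, rfl⟩ := Finset.mem_image.1 hn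
        exact adm_shv q (q - t) n₀ ((memS s hs).2 n₀ hn₀)
    case left_neg =>
      intro s _
      rw [Finset.image_image]
      rw [show shv q (q - t) ∘ shv q t = id from funext fun x =>
        shv_shv q t (q - t) (by omega) x]
      exact Finset.image_id
    case right_neg =>
      intro s _
      rw [Finset.image_image]
      rw [show shv q t ∘ shv q (q - t) = id from funext fun x =>
        shv_shv q (q - t) t (by omega) x]
      exact Finset.image_id
    case h =>
      intro s hs
      obtain ⟨d, hmod⟩ := QS_shift q t k s (memS s hs).1 hk' (memS s hs).2
      rcases Nat.even_or_odd d with hd | hd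
      · rw [hd.neg_one_pow, one_mul] at hmod
        rw [Ef_mod hq a hmod, Ef_mod hq a hmod.neg]
      · rw [hd.neg_one_pow, neg_one_mul] at hmod
        rw [Ef_mod hq a hmod, Ef_mod hq a hmod.neg, neg_neg]
        exact add_comm _ _
  have hndvd : ∀ s ∈ 𝒮, ¬ ((q:ℤ) ∣ SS s) := by
    intro s hs hdvd
    obtain ⟨h1, h2⟩ := SS_bounds q k s (memS s hs).1 hk'
    have h3 : (q:ℤ) ≤ -SS s := Int.le_of_dvd (by omega) (dvd_neg.2 hdvd)
    omega
  have TSUM : ∀ s ∈ 𝒮, ∑ t ∈ Finset.range q,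
      (Ef q a (QS s + 4*(t:ℤ)*SS s) + Ef q a (-(QS s + 4*(t:ℤ)*SS s))) = 0 := by
    intro s hs
    rw [Finset.sum_add_distrib]
    have e1 : ∀ t ∈ Finset.range q,
        Ef q a (QS s + 4*(t:ℤ)*SS s) = Ef q a (QS s) * (Ef q a (4*SS s))^t := by
      intro t _
      rw [show QS s + 4*(t:ℤ)*SS s = QS s + (t:ℤ)*(4*SS s) by ring, Ef_add, Ef_pow]
    have e2 : ∀ t ∈ Finset.range q,
        Ef q a (-(QS s + 4*(t:ℤ)*SS s)) = Ef q a (-QS s) * (Ef q a (4*(-SS s)))^t := by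
      intro t _
      rw [show -(QS s + 4*(t:ℤ)*SS s) = -QS s + (t:ℤ)*(4*(-SS s)) by ring, Ef_add, Ef_pow]
    rw [Finset.sum_congr rfl e1, Finset.sum_congr rfl e2, ← Finset.mul_sum, ← Finset.mul_sum,
      Ef_geom hq ha (SS s) (hndvd s hs),
      Ef_geom hq ha (-(SS s)) (fun hdvd => hndvd s hs ((dvd_neg).1 hdvd)),
      mul_zero, mul_zero, add_zero]
  have QA : (q:ℂ) * A = 0 := by
    calc (q:ℂ) * A = ∑ _t ∈ Finset.range q, A := by
          rw [Finset.sum_const, Finset.card_range, nsmul_eq_mul]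
      _ = ∑ t ∈ Finset.range q, ∑ s ∈ 𝒮,
            (Ef q a (QS s + 4*(t:ℤ)*SS s) + Ef q a (-(QS s + 4*(t:ℤ)*SS s))) :=
          Finset.sum_congr rfl KEY
      _ = ∑ s ∈ 𝒮, ∑ t ∈ Finset.range q,
            (Ef q a (QS s + 4*(t:ℤ)*SS s) + Ef q a (-(QS s + 4*(t:ℤ)*SS s))) :=
          Finset.sum_comm
      _ = 0 := Finset.sum_eq_zero TSUM
  have hAzero : A = 0 := by
    have hqne : (q:ℂ) ≠ 0 := Nat.cast_ne_zero.2 (by omega)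
    exact (mul_eq_zero.1 QA).resolve_left hqne
  have final : Esum a q k + (starRingEnd ℂ) (Esum a q k) = 0 := by
    rw [CONJ, CONV, ← Finset.sum_add_distrib]
    exact hA ▸ hAzero
  have h0 := Complex.add_conj (Esum a q k)
  rw [final] at h0
  have := Complex.ofReal_eq_zero.1 h0.symm
  linarith
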